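/- arXiv:2504.21552 — 3 statements merged into one kernel-verified Lean document; each statement's English description precedes it below -/
import Mathlib

section
/- Let N_r ≥ 2 be an integer and let a ∈ [0,1]. If i* ∈ {0,1,…,N_r−1} is an index minimizing, over i ∈ {0,1,…,N_r−1}, the Euclidean distance from the point (a, 1−a) ∈ ℝ² to the line through the origin and the reference point r^(i), then |a − i*/(N_r−1)| ≤ (2−√2)/(N_r−1). -/
/-- Euclidean distance in the plane from the point `v` to the line through the origin
and the point `w` (the infimum of distances from `v` to points of the line). -/
noncomputable def distToLine (v w : EuclideanSpace ℝ (Fin 2)) : ℝ :=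
  Metric.infDist v {p : EuclideanSpace ℝ (Fin 2) | ∃ t : ℝ, p = t • w}

/-- The point `(x, y)` of the Euclidean plane. -/
noncomputable def pt (x y : ℝ) : EuclideanSpace ℝ (Fin 2) :=
  (WithLp.equiv 2 (Fin 2 → ℝ)).symm ![x, y]

/-- The `i`-th of the `N_r` bi-objective reference points:
`r⁽ⁱ⁾ = (i/(N_r−1), 1 − i/(N_r−1))` for `i = 0, 1, …, N_r−1`. -/
noncomputable def refPoint (Nr i : ℕ) : EuclideanSpace ℝ (Fin 2) :=
  pt ((i : ℝ) / ((Nr : ℝ) - 1)) (1 - (i : ℝ) / ((Nr : ℝ) - 1))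

lemma dist_pt_smul (v₁ v₂ w₁ w₂ t : ℝ) :
    dist (pt v₁ v₂) (t • pt w₁ w₂) = Real.sqrt ((v₁ - t*w₁)^2 + (v₂ - t*w₂)^2) := by
  rw [EuclideanSpace.dist_eq, Fin.sum_univ_two]
  simp [pt, Real.dist_eq]

lemma distToLine_pt (v₁ v₂ w₁ w₂ : ℝ) (hw : 0 < w₁^2 + w₂^2) :
    distToLine (pt v₁ v₂) (pt w₁ w₂) = |v₁*w₂ - v₂*w₁| / Real.sqrt (w₁^2 + w₂^2) := by
  have hs : Real.sqrt (w₁^2 + w₂^2) > 0 := Real.sqrt_pos.2 hw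
  set c : ℝ := (v₁*w₁ + v₂*w₂) / (w₁^2 + w₂^2) with hc
  apply le_antisymm
  · have hm : (c • pt w₁ w₂) ∈ {p : EuclideanSpace ℝ (Fin 2) | ∃ t : ℝ, p = t • pt w₁ w₂} :=
      ⟨c, rfl⟩
    refine le_trans (Metric.infDist_le_dist_of_mem hm) ?_
    rw [dist_pt_smul]
    have hA : (v₁ - c*w₁)^2 + (v₂ - c*w₂)^2 = (v₁*w₂ - v₂*w₁)^2 / (w₁^2 + w₂^2) := by
      rw [hc]; field_simp; ring
    rw [hA, Real.sqrt_div (by positivity), Real.sqrt_sq_eq_abs]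
  · by_contra hlt
    push_neg at hlt
    have hne : Set.Nonempty {p : EuclideanSpace ℝ (Fin 2) | ∃ t : ℝ, p = t • pt w₁ w₂} :=
      ⟨(0:ℝ) • pt w₁ w₂, 0, rfl⟩
    obtain ⟨y, ⟨t, rfl⟩, hy⟩ := (Metric.infDist_lt_iff hne).1 hlt
    rw [dist_pt_smul] at hy
    have h1 : |v₁*w₂ - v₂*w₁| ≤
        Real.sqrt ((v₁ - t*w₁)^2 + (v₂ - t*w₂)^2) * Real.sqrt (w₁^2 + w₂^2) := by
      rw [← Real.sqrt_mul (by positivity), ← Real.sqrt_sq_eq_abs]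
      apply Real.sqrt_le_sqrt
      nlinarith [sq_nonneg ((v₁ - t*w₁)*w₁ + (v₂ - t*w₂)*w₂)]
    have h2 := mul_lt_mul_of_pos_right hy hs
    rw [div_mul_cancel₀ _ hs.ne'] at h2
    linarith

lemma key_ratio (x y Ns N0 s : ℝ) (hx0 : 0 ≤ x) (hy0 : 0 ≤ y) (hNsp : 0 < Ns)
    (hN0p : 0 < N0) (hNs1 : Ns ≤ 1) (hN0s : 1 ≤ N0 * s) (hs0 : 0 ≤ s)
    (hm : x / Ns ≤ y / N0) : x ≤ s * y := by
  have h1 : x * N0 ≤ y * Ns := (div_le_div_iff₀ hNsp hN0p).1 hm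
  nlinarith [mul_le_mul_of_nonneg_right h1 hs0, mul_nonneg hy0 hs0]

lemma final1 (s b x y d : ℝ) (hs2 : s*s = 2) (hs1 : 1 ≤ s) (hs32 : s ≤ 3/2)
    (hb : 0 < b) (hx : x = |d - b|) (hyd : y = |d|) (hy : y ≤ b/2)
    (hxsy : x ≤ s*y) : x ≤ (2-s)*b := by
  rcases abs_cases (d - b) with ⟨e1, _⟩ | ⟨e1, _⟩ <;>
    rcases abs_cases d with ⟨e2, _⟩ | ⟨e2, _⟩ <;>
    subst hx hyd <;> rw [e1] at hxsy ⊢ <;> rw [e2] at hxsy hy <;> nlinarith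

lemma final2 (s b x y d : ℝ) (hs2 : s*s = 2) (hs1 : 1 ≤ s) (hs32 : s ≤ 3/2)
    (hb : 0 < b) (hx : x = |d|) (hyd : y = |d - b|) (hy : y ≤ b/2)
    (hxsy : x ≤ s*y) : x ≤ (2-s)*b := by
  rcases abs_cases (d - b) with ⟨e1, _⟩ | ⟨e1, _⟩ <;>
    rcases abs_cases d with ⟨e2, _⟩ | ⟨e2, _⟩ <;>
    subst hx hyd <;> rw [e2] at hxsy ⊢ <;> rw [e1] at hxsy hy <;> nlinarith

set_option maxHeartbeats 1600000 in
/-- Let `N_r ≥ 2` be an integer and `a ∈ [0,1]`. If `i* ∈ {0,…,N_r−1}` minimizes, over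
`i ∈ {0,…,N_r−1}`, the Euclidean distance from the point `(a, 1−a)` to the line through
the origin and the reference point `r⁽ⁱ⁾`, then
`|a − i*/(N_r−1)| ≤ (2−√2)/(N_r−1)`. -/
theorem associated_refPoint_close (Nr : ℕ) (hNr : 2 ≤ Nr) (a : ℝ)
    (ha : a ∈ Set.Icc (0 : ℝ) 1) (istar : ℕ) (histar : istar ≤ Nr - 1)
    (hmin : ∀ i ≤ Nr - 1,
      distToLine (pt a (1 - a)) (refPoint Nr istar) ≤
        distToLine (pt a (1 - a)) (refPoint Nr i)) :
    |a - (istar : ℝ) / ((Nr : ℝ) - 1)| ≤ (2 - Real.sqrt 2) / ((Nr : ℝ) - 1) := by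
  obtain ⟨ha0, ha1⟩ := ha
  have hs2 : Real.sqrt 2 * Real.sqrt 2 = 2 := Real.mul_self_sqrt (by norm_num)
  have hs1 : 1 ≤ Real.sqrt 2 := by nlinarith [Real.sqrt_nonneg 2]
  have hs32 : Real.sqrt 2 ≤ 3/2 := by nlinarith [Real.sqrt_nonneg 2]
  set s : ℝ := Real.sqrt 2 with hsdef
  set n : ℝ := (Nr : ℝ) - 1 with hndef
  have hn1 : 1 ≤ n := by
    have : (2:ℝ) ≤ (Nr:ℝ) := by exact_mod_cast hNr
    rw [hndef]; linarith
  have hn0 : 0 < n := by linarith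
  -- distance formula for each reference index
  have hD : ∀ i : ℕ,
      distToLine (pt a (1 - a)) (refPoint Nr i) =
        |a - (i:ℝ)/n| / Real.sqrt (((i:ℝ)/n)^2 + (1 - (i:ℝ)/n)^2) := by
    intro i
    have hw : 0 < ((i:ℝ)/n)^2 + (1 - (i:ℝ)/n)^2 := by
      nlinarith [sq_nonneg ((i:ℝ)/n - 1/2)]
    rw [show refPoint Nr i = pt ((i:ℝ)/n) (1 - (i:ℝ)/n) from rfl, distToLine_pt _ _ _ _ hw]
    congr 1
    rw [show a*(1-(i:ℝ)/n) - (1-a)*((i:ℝ)/n) = a - (i:ℝ)/n from by ring]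
  have hcast : ∀ i : ℕ, i ≤ Nr - 1 → (i:ℝ) ≤ n := by
    intro i hi
    have h1 : (i:ℝ) ≤ ((Nr - 1 : ℕ) : ℝ) := by exact_mod_cast hi
    have h2 : ((Nr - 1 : ℕ) : ℝ) = n := by
      rw [Nat.cast_sub (by omega)]; simp [hndef]
    linarith [h2 ▸ h1]
  have hNormU : ∀ t : ℝ, 0 ≤ t → t ≤ 1 → Real.sqrt (t^2 + (1-t)^2) ≤ 1 := by
    intro t h0 h1
    have h := Real.sqrt_le_sqrt (show t^2 + (1-t)^2 ≤ 1 by nlinarith)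
    simpa using h
  have hNormL : ∀ t : ℝ, Real.sqrt (1/2) ≤ Real.sqrt (t^2 + (1-t)^2) := by
    intro t
    exact Real.sqrt_le_sqrt (by nlinarith [sq_nonneg (t - 1/2)])
  have hhalf : Real.sqrt (1/2) * s = 1 := by
    rw [hsdef, ← Real.sqrt_mul (by norm_num)]; norm_num
  have hhalfpos : 0 < Real.sqrt (1/2) := Real.sqrt_pos.2 (by norm_num)
  -- the nearest index i₀
  set i₀ : ℕ := ⌊a * n + 1/2⌋₊ with hi₀def
  have hfl : (i₀ : ℝ) ≤ a * n + 1/2 := Nat.floor_le (by positivity)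
  have hfu : a * n + 1/2 < (i₀ : ℝ) + 1 := Nat.lt_floor_add_one _
  have hi₀le : i₀ ≤ Nr - 1 := by
    have hlt : i₀ < Nr := by
      rw [hi₀def, Nat.floor_lt (by positivity)]
      have han : a * n ≤ n := by nlinarith
      have hnn : n + 1 = (Nr:ℝ) := by rw [hndef]; ring
      nlinarith
    omega
  clear_value i₀
  have hNrn : n + 1 = (Nr:ℝ) := by rw [hndef]; ring
  clear_value n s
  -- notation
  set x : ℝ := |a - (istar:ℝ)/n| with hxdef
  set y : ℝ := |a - (i₀:ℝ)/n| with hydef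
  have hy : y ≤ (1/n)/2 := by
    have h1 : |a*n - (i₀:ℝ)| ≤ 1/2 := by rw [abs_le]; constructor <;> linarith
    rw [hydef, show a - (i₀:ℝ)/n = (a*n - i₀)/n from by field_simp, abs_div,
      abs_of_pos hn0]
    rw [div_le_div_iff₀ hn0 (by norm_num : (0:ℝ) < 2)]
    have hinv : 1/n * n = 1 := by field_simp
    linarith
  have hx0 : 0 ≤ x := abs_nonneg _
  have hy0 : 0 ≤ y := abs_nonneg _
  -- x ≤ s * y from minimality
  have hxsy : x ≤ s * y := by
    have hm := hmin i₀ hi₀le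
    rw [hD istar, hD i₀] at hm
    refine key_ratio x y _ _ s hx0 hy0 (lt_of_lt_of_le hhalfpos (hNormL _))
      (lt_of_lt_of_le hhalfpos (hNormL _)) ?_ ?_ (by linarith) hm
    · exact hNormU _ (by positivity) (by rw [div_le_one hn0]; exact hcast istar histar)
    · calc (1:ℝ) = Real.sqrt (1/2) * s := hhalf.symm
      _ ≤ _ * s := mul_le_mul_of_nonneg_right (hNormL _) (by linarith)
  clear_value x y
  clear hmin hD hNormU hNormL hcast
  have hgoal : x ≤ (2 - s) * (1/n) → x ≤ (2 - s)/n := by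
    intro h; calc x ≤ (2-s)*(1/n) := h
    _ = (2-s)/n := by ring
  by_cases heq : istar = i₀
  · apply hgoal
    have hxy : x = y := by rw [hxdef, hydef, heq]
    rw [hxy]
    nlinarith
  -- istar and i₀ are adjacent
  · have hxb : x ≤ s * ((1/n)/2) := by
      calc x ≤ s * y := hxsy
      _ ≤ s * ((1/n)/2) := mul_le_mul_of_nonneg_left hy (by linarith)
    have hsum : |(istar:ℝ)/n - (i₀:ℝ)/n| ≤ x + y := by
      calc |(istar:ℝ)/n - (i₀:ℝ)/n| = |(a - (i₀:ℝ)/n) - (a - (istar:ℝ)/n)| := by ring_nf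
      _ ≤ |a - (i₀:ℝ)/n| + |a - (istar:ℝ)/n| := abs_sub _ _
      _ = x + y := by rw [hxdef, hydef]; ring
    have hlt2 : |(istar:ℝ) - (i₀:ℝ)| < 2 := by
      have h1 : |(istar:ℝ)/n - (i₀:ℝ)/n| = |(istar:ℝ) - (i₀:ℝ)|/n := by
        rw [show (istar:ℝ)/n - (i₀:ℝ)/n = ((istar:ℝ) - (i₀:ℝ))/n from by ring,
          abs_div, abs_of_pos hn0]
      have h2 : x + y < 2/n := by
        have h3 : s*((1/n)/2) + (1/n)/2 < 2/n := by
          rw [show s*((1/n)/2) + (1/n)/2 = (s+1)/2 * (1/n) from by ring,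
            show (2:ℝ)/n = 2 * (1/n) from by ring]
          exact mul_lt_mul_of_pos_right (by linarith) (by positivity)
        linarith
      have h4 := lt_of_le_of_lt hsum h2
      rw [h1, div_lt_div_iff₀ hn0 hn0] at h4
      by_contra h5
      push_neg at h5
      have h6 := mul_le_mul_of_nonneg_right h5 hn0.le
      linarith
    have hadj : istar = i₀ + 1 ∨ i₀ = istar + 1 := by
      rcases Ne.lt_or_gt heq with h | h
      · right
        by_contra hne
        have h2 : istar + 2 ≤ i₀ := by omega
        have h3 : (istar:ℝ) + 2 ≤ (i₀:ℝ) := by exact_mod_cast h2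
        rw [abs_sub_comm, abs_of_nonneg (by linarith)] at hlt2
        linarith
      · left
        by_contra hne
        have h2 : i₀ + 2 ≤ istar := by omega
        have h3 : (i₀:ℝ) + 2 ≤ (istar:ℝ) := by exact_mod_cast h2
        rw [abs_of_nonneg (by linarith)] at hlt2
        linarith
    apply hgoal
    rcases hadj with h | h
    · refine final1 s (1/n) x y (a - (i₀:ℝ)/n) hs2 hs1 hs32 (by positivity) ?_ hydef hy hxsy
      rw [hxdef, h]
      congr 1
      push_cast
      field_simp
      ring
    · refine final2 s (1/n) x y (a - (istar:ℝ)/n) hs2 hs1 hs32 (by positivity) hxdef ?_ hy hxsy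
      rw [hydef, h]
      congr 1
      push_cast
      field_simp
      ring
end

section
/- Let n ≥ 1 and N_r ≥ 2 be integers and let S ⊆ {0,1,…,n} satisfy 0 ∈ S and n ∈ S. Suppose that for every i ∈ {0,1,…,N_r−1} there exists s ∈ S with |s/n − i/(N_r−1)| ≤ (2−√2)/(N_r−1). Then MEI(S) ≤ ⌈(5−2√2)·n/(N_r−1)⌉. -/
/-- The maximum empty interval size of a set `S ⊆ {0,1,…,n}`: with the elements of `S`
listed in increasing order as `j₁ < j₂ < … < jₘ`, it is
`max { j₁, n − jₘ, j_{i+1} − j_i : i = 1,…,m−1 }`. -/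
def MEI (n : ℕ) (S : Finset ℕ) : ℕ :=
  let l := S.sort (· ≤ ·)
  (l.headI :: (n - l.getLastD 0) :: List.zipWith (fun a b => b - a) l l.tail).foldr max 0

lemma foldr_max_le {B : ℕ} (L : List ℕ) (h : ∀ x ∈ L, x ≤ B) : L.foldr max 0 ≤ B := by
  induction L with
  | nil => exact Nat.zero_le B
  | cons a t ih =>
    simp only [List.foldr_cons, max_le_iff]
    exact ⟨h a (by simp), ih fun x hx => h x (by simp [hx])⟩

/-- Let `n ≥ 1` and `N_r ≥ 2` be integers and let `S ⊆ {0,1,…,n}` with `0 ∈ S` and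
`n ∈ S`. Suppose that for every `i ∈ {0,1,…,N_r−1}` there exists `s ∈ S` with
`|s/n − i/(N_r−1)| ≤ (2−√2)/(N_r−1)`. Then `MEI(S) ≤ ⌈(5−2√2)·n/(N_r−1)⌉`. -/
theorem mei_upper_bound (n Nr : ℕ) (hn : 1 ≤ n) (hNr : 2 ≤ Nr) (S : Finset ℕ)
    (hS : S ⊆ Finset.range (n + 1)) (h0 : 0 ∈ S) (hn' : n ∈ S)
    (hcover : ∀ i ≤ Nr - 1, ∃ s ∈ S,
      |(s : ℝ) / (n : ℝ) - (i : ℝ) / ((Nr : ℝ) - 1)| ≤ (2 - Real.sqrt 2) / ((Nr : ℝ) - 1)) :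
    (MEI n S : ℤ) ≤ ⌈(5 - 2 * Real.sqrt 2) * (n : ℝ) / ((Nr : ℝ) - 1)⌉ := by
  set c : ℝ := 5 - 2 * Real.sqrt 2 with hc
  have hs2lt : Real.sqrt 2 < 2 := by
    have h4 : Real.sqrt 2 < Real.sqrt 4 := by
      apply Real.sqrt_lt_sqrt <;> norm_num
    simpa [show (4:ℝ) = 2^2 by norm_num, Real.sqrt_sq] using h4
  have hs2pos : 0 < Real.sqrt 2 := Real.sqrt_pos.2 (by norm_num)
  have hcpos : 0 < c := by simp only [hc]; linarith
  have hnR : (0:ℝ) < n := by exact_mod_cast hn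
  have hmR : (1:ℝ) ≤ (Nr:ℝ) - 1 := by
    have : (2:ℝ) ≤ Nr := by exact_mod_cast hNr
    linarith
  have hmpos : (0:ℝ) < (Nr:ℝ) - 1 := by linarith
  have hxpos : 0 < c * (n:ℝ) / ((Nr:ℝ) - 1) := by positivity
  set C : ℤ := ⌈c * (n:ℝ) / ((Nr:ℝ) - 1)⌉ with hCdef
  have hC0 : 0 ≤ C := Int.ceil_nonneg hxpos.le
  -- the gap lemma
  have gap : ∀ a ∈ S, ∀ b ∈ S, a < b → (∀ s ∈ S, s ≤ a ∨ b ≤ s) → (b:ℤ) - a ≤ C := by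
    intro a ha b hb hab hmid
    rw [hCdef, Int.le_ceil_iff]
    by_contra hcon
    push_neg at hcon
    have hbn : b ≤ n := by have := hS hb; simpa [Nat.lt_succ_iff] using Finset.mem_range.1 this
    have haR : (0:ℝ) ≤ (a:ℝ) := Nat.cast_nonneg a
    have hbR : (b:ℝ) ≤ n := by exact_mod_cast hbn
    have habR : (a:ℝ) < b := by exact_mod_cast hab
    have hcon' : c * (n:ℝ) / ((Nr:ℝ) - 1) ≤ ((b:ℝ) - a) - 1 := by
      push_cast at hcon ⊢; linarith
    set t : ℝ := ((a:ℝ) + b) / 2 with ht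
    set x : ℝ := t * ((Nr:ℝ) - 1) / n with hx
    have hx0 : 0 ≤ x := by
      apply div_nonneg _ hnR.le
      apply mul_nonneg _ hmpos.le
      rw [ht]; linarith
    have hxm : x ≤ (Nr:ℝ) - 1 := by
      rw [hx, div_le_iff₀ hnR]
      have ht' : t ≤ n := by rw [ht]; linarith
      calc t * ((Nr:ℝ) - 1) ≤ (n:ℝ) * ((Nr:ℝ) - 1) := by nlinarith
        _ = ((Nr:ℝ) - 1) * n := by ring
    set i : ℤ := ⌊x + 1/2⌋ with hi
    have hi0 : 0 ≤ i := by
      apply Int.floor_nonneg.2; linarith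
    have him : i ≤ (Nr:ℤ) - 1 := by
      have h1 : (i:ℝ) ≤ x + 1/2 := Int.floor_le _
      have h2 : (i:ℝ) < ((Nr:ℤ) - 1 + 1 : ℤ) := by push_cast; linarith
      have := (@Int.cast_lt ℝ _ _ _).1 h2
      omega
    have hiNat : i.toNat ≤ Nr - 1 := by omega
    obtain ⟨s, hsS, hsabs⟩ := hcover i.toNat hiNat
    have hicast : ((i.toNat : ℕ) : ℝ) = (i:ℝ) := by exact_mod_cast Int.toNat_of_nonneg hi0
    rw [hicast] at hsabs
    have hix : |(i:ℝ) - x| ≤ 1/2 := by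
      have h1 : (i:ℝ) ≤ x + 1/2 := Int.floor_le _
      have h2 : x + 1/2 < i + 1 := Int.lt_floor_add_one _
      rw [abs_le]; constructor <;> linarith
    have hs1 : |(s:ℝ) - (i:ℝ) * n / ((Nr:ℝ)-1)| ≤ (2 - Real.sqrt 2) * n / ((Nr:ℝ)-1) := by
      have h1 : |((s:ℝ)/n - (i:ℝ)/((Nr:ℝ)-1))| * n ≤ (2 - Real.sqrt 2) / ((Nr:ℝ)-1) * n :=
        mul_le_mul_of_nonneg_right hsabs hnR.le
      have h2 : |((s:ℝ)/n - (i:ℝ)/((Nr:ℝ)-1))| * n = |((s:ℝ)/n - (i:ℝ)/((Nr:ℝ)-1)) * n| := by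
        rw [abs_mul, abs_of_pos hnR]
      have h3 : ((s:ℝ)/n - (i:ℝ)/((Nr:ℝ)-1)) * n = (s:ℝ) - (i:ℝ) * n / ((Nr:ℝ)-1) := by
        field_simp
      rw [h2, h3] at h1
      calc |(s:ℝ) - (i:ℝ) * n / ((Nr:ℝ)-1)| ≤ (2 - Real.sqrt 2) / ((Nr:ℝ)-1) * n := h1
        _ = (2 - Real.sqrt 2) * n / ((Nr:ℝ)-1) := by ring
    have hs2 : |(i:ℝ) * n / ((Nr:ℝ)-1) - t| ≤ n / (2 * ((Nr:ℝ)-1)) := by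
      have key : (i:ℝ) * n / ((Nr:ℝ)-1) - t = ((i:ℝ) - x) * (n / ((Nr:ℝ)-1)) := by
        rw [hx]; field_simp
      rw [key, abs_mul, abs_of_pos (by positivity : (0:ℝ) < n / ((Nr:ℝ)-1))]
      calc |(i:ℝ) - x| * (n / ((Nr:ℝ)-1)) ≤ (1/2) * (n / ((Nr:ℝ)-1)) := by
            apply mul_le_mul_of_nonneg_right hix (by positivity)
        _ = n / (2 * ((Nr:ℝ)-1)) := by field_simp
    have hst : |(s:ℝ) - t| ≤ (c/2) * n / ((Nr:ℝ)-1) := by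
      calc |(s:ℝ) - t| ≤ |(s:ℝ) - (i:ℝ) * n / ((Nr:ℝ)-1)| + |(i:ℝ) * n / ((Nr:ℝ)-1) - t| := by
            apply abs_sub_le
        _ ≤ (2 - Real.sqrt 2) * n / ((Nr:ℝ)-1) + n / (2 * ((Nr:ℝ)-1)) := add_le_add hs1 hs2
        _ = (c/2) * n / ((Nr:ℝ)-1) := by rw [hc]; field_simp; ring
    have hhalf : (c/2) * n / ((Nr:ℝ)-1) < ((b:ℝ) - a) / 2 := by
      have h2 : (c/2) * n / ((Nr:ℝ)-1) = (c * n / ((Nr:ℝ)-1)) / 2 := by ring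
      rw [h2]; linarith
    rw [abs_le] at hst
    have hsa : (a:ℝ) < s := by rw [ht] at hst; linarith [hst.1]
    have hsb : (s:ℝ) < b := by rw [ht] at hst; linarith [hst.2]
    have hsa' : a < s := by exact_mod_cast hsa
    have hsb' : s < b := by exact_mod_cast hsb
    rcases hmid s hsS with h | h <;> omega
  -- now bound MEI
  have hne : S.sort (· ≤ ·) ≠ [] := by
    intro h
    have := (Finset.mem_sort (· ≤ ·)).2 h0
    rw [h] at this
    simp at this
  obtain ⟨hd, tl, hcons⟩ := List.exists_cons_of_ne_nil hne
  set L : List ℕ := hd :: tl with hLdef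
  have hlmem : ∀ y, y ∈ L ↔ y ∈ S := by
    intro y; rw [← hcons]; exact Finset.mem_sort _
  have hsorted : List.Pairwise (· < ·) L := hcons ▸ (Finset.sortedLT_sort S).pairwise
  have hmono : StrictMono L.get := hsorted.sortedLT.strictMono_get
  have hmono' : ∀ (p q : ℕ) (hp : p < L.length) (hq : q < L.length), p ≤ q →
      L[p]'hp ≤ L[q]'hq := by
    intro p q hp hq hpq
    rcases eq_or_lt_of_le hpq with rfl | h
    · exact le_refl _
    · have := hmono (show (⟨p, hp⟩ : Fin L.length) < ⟨q, hq⟩ from h)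
      simpa using this.le
  have hlen : 0 < L.length := by simp [hLdef]
  -- head is 0
  have hhd : hd = 0 := by
    have h0m : (0:ℕ) ∈ L := (hlmem 0).2 h0
    rcases List.mem_cons.1 h0m with h | h
    · omega
    · exact absurd ((List.pairwise_cons.1 hsorted).1 0 h) (by omega)
  -- last is ≥ n
  have hlastge : n ≤ L.getLastD 0 := by
    have hLne : L ≠ [] := by simp [hLdef]
    have heq : L.getLastD 0 = L[L.length - 1]'(by omega) := by
      rw [List.getLastD_eq_getLast?, List.getLast?_eq_getLast hLne, List.getLast_eq_getElem]; rfl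
    obtain ⟨j, hj, hjn⟩ := List.mem_iff_getElem.1 ((hlmem n).2 hn')
    have := hmono' j (L.length - 1) hj (by omega) (by omega)
    omega
  suffices h : MEI n S ≤ C.toNat by
    calc (MEI n S : ℤ) ≤ (C.toNat : ℤ) := by exact_mod_cast h
      _ = C := Int.toNat_of_nonneg hC0
  have hCt : 0 ≤ C.toNat := Nat.zero_le _
  simp only [MEI, hcons]
  apply foldr_max_le
  intro y hy
  simp only [List.mem_cons] at hy
  rcases hy with hy | hy | hy
  · -- head
    have : y = hd := by simpa [hLdef] using hy
    omega
  · -- n - last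
    have : y = n - L.getLastD 0 := by simpa [hLdef] using hy
    omega
  · -- gaps
    have hy' : y ∈ List.zipWith (fun a b => b - a) L L.tail := by
      simpa [hLdef] using hy
    obtain ⟨k, hk, hky⟩ := List.mem_iff_getElem.1 hy'
    have hk1 : k + 1 < L.length := by
      have h1 := lt_of_lt_of_le hk (le_of_eq (List.length_zipWith ..))
      have h2 := lt_of_lt_of_le h1 inf_le_right
      rw [List.length_tail] at h2
      omega
    have hk0 : k < L.length := by omega
    rw [List.getElem_zipWith, List.getElem_tail] at hky
    set a := L[k]'hk0 with hadef
    set b := L[k+1]'hk1 with hbdef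
    have haS : a ∈ S := (hlmem a).1 (List.getElem_mem _)
    have hbS : b ∈ S := (hlmem b).1 (List.getElem_mem _)
    have hab : a < b := by
      have := hmono (show (⟨k, hk0⟩ : Fin L.length) < ⟨k+1, hk1⟩ by simp)
      simpa using this
    have hmid : ∀ s ∈ S, s ≤ a ∨ b ≤ s := by
      intro s hs
      obtain ⟨j, hj, hjs⟩ := List.mem_iff_getElem.1 ((hlmem s).2 hs)
      rcases le_or_gt j k with h | h
      · left; have := hmono' j k hj hk0 h; omega
      · right; have := hmono' (k+1) j hk1 hj h; omega
    have hgap := gap a haS b hbS hab hmid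
    omega
end

section
/- There exist a constant c > 0 and a threshold n₀ ∈ ℕ such that for every odd integer n ≥ n₀ the following holds: if S is a uniformly random subset of size (n+1)/2 of {0,1,…,n}, then the expected value of MEI(S) is at least c·ln n. (This is the combinatorial core of the statement that, when the combined parent and offspring population of the NSGA-III with N = (n+1)/2 and N_r = 2N covers the full Pareto front of OneMinMax, the next population has expected MEI of Ω(log n).) -/
lemma le_foldr_max {l : List ℕ} {x : ℕ} (hx : x ∈ l) (b : ℕ) : x ≤ l.foldr max b := by
  induction l with
  | nil => simp at hx
  | cons a t ih =>
    rcases List.mem_cons.1 hx with h | h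
    · subst h; exact le_max_left _ _
    · exact le_trans (ih h) (le_max_right _ _)

lemma cross (a k : ℕ) : ∀ l : List ℕ, (∀ x ∈ l, x < a ∨ a + k ≤ x) → l.headI < a →
    (∃ v ∈ l, a + k ≤ v) →
    ∃ g ∈ List.zipWith (fun a b => b - a) l l.tail, k ≤ g := by
  intro l
  induction l with
  | nil => rintro _ _ ⟨v, hv, _⟩; simp at hv
  | cons x t ih =>
    rintro hav hx ⟨v, hv, hvk⟩
    match t, ih with
    | [], _ =>
      rw [List.mem_singleton] at hv
      subst hv
      simp only [List.headI] at hx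
      omega
    | y :: t', ih =>
      rcases hav y (by simp) with hy | hy
      · have hvm : v ∈ y :: t' := by
          rcases List.mem_cons.1 hv with h | h
          · exfalso; simp only [List.headI] at hx; omega
          · exact h
        obtain ⟨g, hg, hgk⟩ := ih (fun z hz => hav z (List.mem_cons_of_mem _ hz)) hy ⟨v, hvm, hvk⟩
        exact ⟨g, by simp only [List.tail_cons, List.zipWith_cons_cons]; exact List.mem_cons_of_mem _ hg, hgk⟩
      · refine ⟨y - x, ?_, ?_⟩
        · simp
        · simp only [List.headI] at hx; omega

lemma list_ge (n k a : ℕ) (x : ℕ) (t : List ℕ)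
    (hS : ∀ y ∈ x :: t, y ≤ n) (hak : a + k ≤ n + 1)
    (havoid : ∀ y ∈ x :: t, y < a ∨ a + k ≤ y) :
    k ≤ ((x :: t).headI :: (n - (x :: t).getLastD 0) ::
        List.zipWith (fun a b => b - a) (x :: t) (x :: t).tail).foldr max 0 := by
  have getD : ∀ (t' : List ℕ) (x' : ℕ), t'.getLastD x' ∈ x' :: t' := by
    intro t'
    induction t' with
    | nil => intro x'; simp
    | cons y t'' ih =>
      intro x'
      rw [List.getLastD_cons]
      exact List.mem_cons_of_mem _ (ih y)
  set l := x :: t with hl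
  have hlmem : l.getLastD 0 ∈ l := by
    rw [hl, List.getLastD_cons]; exact getD t x
  by_cases hall : ∃ v ∈ l, a + k ≤ v
  · obtain ⟨v, hv, hvk⟩ := hall
    by_cases hhead : l.headI < a
    · obtain ⟨g, hg, hgk⟩ := cross a k l havoid hhead ⟨v, hv, hvk⟩
      exact le_trans hgk (le_foldr_max
        (List.mem_cons_of_mem _ (List.mem_cons_of_mem _ hg)) 0)
    · rcases havoid l.headI (by rw [hl]; exact List.mem_cons_self) with h | h
      · omega
      · exact le_trans (by omega) (le_foldr_max List.mem_cons_self 0)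
  · push_neg at hall
    have h1 := havoid _ hlmem
    have h2 := hall _ hlmem
    have h3 := hS _ hlmem
    exact le_trans (show k ≤ n - l.getLastD 0 by omega)
      (le_foldr_max (List.mem_cons_of_mem _ List.mem_cons_self) 0)

lemma mei_ge (n k a : ℕ) (S : Finset ℕ) (hS : ∀ x ∈ S, x ≤ n) (hne : S.Nonempty)
    (hak : a + k ≤ n + 1) (havoid : ∀ x ∈ S, x < a ∨ a + k ≤ x) : k ≤ MEI n S := by
  have hmem : ∀ x, x ∈ S.sort (· ≤ ·) ↔ x ∈ S := fun x => Finset.mem_sort _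
  have hlne : S.sort (· ≤ ·) ≠ [] := by
    obtain ⟨x, hx⟩ := hne
    exact List.ne_nil_of_mem ((hmem x).2 hx)
  unfold MEI
  obtain ⟨x, t, he⟩ := List.exists_cons_of_ne_nil hlne
  rw [he]
  exact list_ge n k a x t (fun y hy => by
      have := (hmem y).1 (he ▸ hy); exact Nat.lt_succ_iff.1 (Finset.mem_range.1 (by
        exact Finset.mem_range.2 (Nat.lt_succ_of_le (hS y this)))))
    hak (fun y hy => havoid y ((hmem y).1 (he ▸ hy)))

-- (a+1) * C(a, b) = C(a+1, b) * (a+1-b)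
lemma ch1 (a b : ℕ) : (a + 1) * Nat.choose a b = Nat.choose (a + 1) b * (a + 1 - b) := by
  have h1 := Nat.add_one_mul_choose_eq a b
  have h2 := Nat.choose_succ_right_eq (a + 1) b
  simpa using h1.trans h2

section F
variable (M : ℕ)
def f (M j : ℕ) : ℕ := (2 * M - j).choose M

lemma fstep {M j : ℕ} (hj : j < 2 * M) :
    f M (j + 1) * (2 * M - j) = f M j * (M - j) := by
  obtain ⟨a, ha⟩ : ∃ a, 2 * M - j = a + 1 := ⟨2 * M - j - 1, by omega⟩
  have h1 : 2 * M - (j + 1) = a := by omega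
  have h2 : a + 1 - M = M - j := by omega
  unfold f
  rw [ha, h1, mul_comm, ch1 a M, h2]

lemma fpos {M j : ℕ} (hj : j ≤ M) : 0 < f M j :=
  Nat.choose_pos (by omega)

lemma fupper {M : ℕ} : ∀ {k : ℕ}, k ≤ M → 2 ^ k * f M k ≤ f M 0 := by
  intro k
  induction k with
  | zero => simp
  | succ j ih =>
    intro hjM
    have hstep := fstep (M := M) (j := j) (by omega)
    have h2 : 2 * f M (j+1) * (M - j) ≤ f M j * (M - j) := by
      calc 2 * f M (j+1) * (M - j) = f M (j+1) * (2 * (M - j)) := by ring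
        _ ≤ f M (j+1) * (2 * M - j) := Nat.mul_le_mul_left _ (by omega)
        _ = f M j * (M - j) := hstep
    have h3 : 2 * f M (j+1) ≤ f M j := Nat.le_of_mul_le_mul_right h2 (by omega)
    calc 2 ^ (j+1) * f M (j+1) = 2 ^ j * (2 * f M (j+1)) := by ring
      _ ≤ 2 ^ j * f M j := Nat.mul_le_mul_left _ h3
      _ ≤ f M 0 := ih (by omega)

lemma flower {M k : ℕ} (hk : k ≤ M) : ∀ {j : ℕ}, j ≤ k →
    f M 0 * (M - k) ^ j ≤ f M j * (2 * M) ^ j := by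
  intro j
  induction j with
  | zero => simp
  | succ i ih =>
    intro hik
    have hstep := fstep (M := M) (j := i) (by omega)
    calc f M 0 * (M - k) ^ (i+1) = (f M 0 * (M - k) ^ i) * (M - k) := by ring
      _ ≤ (f M i * (2 * M) ^ i) * (M - k) := Nat.mul_le_mul_right _ (ih (by omega))
      _ = (f M i * (M - k)) * (2 * M) ^ i := by ring
      _ ≤ (f M i * (M - i)) * (2 * M) ^ i := by
          exact Nat.mul_le_mul_right _ (Nat.mul_le_mul_left _ (by omega))
      _ = (f M (i+1) * (2 * M - i)) * (2 * M) ^ i := by rw [hstep]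
      _ ≤ (f M (i+1) * (2 * M)) * (2 * M) ^ i := by
          exact Nat.mul_le_mul_right _ (Nat.mul_le_mul_left _ (by omega))
      _ = f M (i+1) * (2 * M) ^ (i+1) := by ring

lemma fpair {M j r : ℕ} (hjr : j ≤ r) (hr : r < 2 * M) :
    f M (r + 1) * f M j ≤ f M r * f M (j + 1) := by
  have h1 := fstep (M := M) (j := r) hr
  have h2 := fstep (M := M) (j := j) (by omega)
  have key : (M - r) * (2 * M - j) ≤ (M - j) * (2 * M - r) := by
    rcases le_or_gt M r with h | h
    · simp [Nat.sub_eq_zero_of_le h]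
    · have huv : M - r ≤ M - j := by omega
      have e2 : 2 * M - j = M + (M - j) := by omega
      have e3 : 2 * M - r = M + (M - r) := by omega
      rw [e2, e3, Nat.mul_add, Nat.mul_add]
      exact Nat.add_le_add (Nat.mul_le_mul_right M huv) (le_of_eq (mul_comm _ _))
  have hmul : f M (r+1) * f M j * ((2*M - r) * (2*M - j)) ≤
      f M r * f M (j+1) * ((2*M - r) * (2*M - j)) := by
    calc f M (r+1) * f M j * ((2*M - r) * (2*M - j))
        = (f M (r+1) * (2*M - r)) * f M j * (2*M - j) := by ring
      _ = (f M r * (M - r)) * f M j * (2*M - j) := by rw [h1]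
      _ = f M r * f M j * ((M - r) * (2*M - j)) := by ring
      _ ≤ f M r * f M j * ((M - j) * (2*M - r)) := Nat.mul_le_mul_left _ key
      _ = f M r * (f M j * (M - j)) * (2*M - r) := by ring
      _ = f M r * (f M (j+1) * (2*M - j)) * (2*M - r) := by rw [h2]
      _ = f M r * f M (j+1) * ((2*M - r) * (2*M - j)) := by ring
  exact Nat.le_of_mul_le_mul_right hmul (Nat.mul_pos (by omega) (by omega))

lemma flogconcave {M k : ℕ} (hk : 2 * k ≤ M) :
    f M (2 * k) * f M 0 ≤ f M k * f M k := by
  have main : ∀ i ≤ k, f M (k + i) * f M 0 ≤ f M k * f M i := by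
    intro i
    induction i with
    | zero => intro _; simp [Nat.mul_comm]
    | succ i ih =>
      intro hik
      have h1 : f M (k + i + 1) * f M i ≤ f M (k + i) * f M (i + 1) :=
        fpair (by omega) (by omega)
      have h2 := ih (by omega)
      have hpos : 0 < f M i := fpos (by omega)
      have : f M (k + (i+1)) * f M 0 * f M i ≤ f M k * f M (i+1) * f M i := by
        calc f M (k + (i+1)) * f M 0 * f M i
            = (f M (k + i + 1) * f M i) * f M 0 := by ring_nf
          _ ≤ (f M (k + i) * f M (i+1)) * f M 0 := Nat.mul_le_mul_right _ h1
          _ = (f M (k + i) * f M 0) * f M (i+1) := by ring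
          _ ≤ (f M k * f M i) * f M (i+1) := Nat.mul_le_mul_right _ h2
          _ = f M k * f M (i+1) * f M i := by ring
      exact Nat.le_of_mul_le_mul_right this hpos
  have := main k le_rfl
  rwa [show k + k = 2 * k by ring] at this
end F

open Finset

lemma bonf {α : Type*} [DecidableEq α] (m : ℕ) (A : ℕ → Finset α) :
    (∑ i ∈ range m, ((A i).card : ℝ)) -
      ∑ i ∈ range m, ∑ j ∈ range i, ((A i ∩ A j).card : ℝ) ≤
      (((range m).biUnion A).card : ℝ) := by
  induction m with
  | zero => simp
  | succ m ih =>
    rw [range_add_one, sum_insert notMem_range_self, sum_insert notMem_range_self,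
      biUnion_insert]
    have hu : ((A m ∪ (range m).biUnion A).card : ℝ) =
        (A m).card + ((range m).biUnion A).card - ((A m ∩ (range m).biUnion A).card : ℝ) := by
      have := Finset.card_union_add_card_inter (A m) ((range m).biUnion A)
      have h := congrArg (Nat.cast : ℕ → ℝ) this
      push_cast at h
      linarith
    have hinter : ((A m ∩ (range m).biUnion A).card : ℝ) ≤
        ∑ j ∈ range m, ((A m ∩ A j).card : ℝ) := by
      have h1 : A m ∩ (range m).biUnion A = (range m).biUnion (fun j => A m ∩ A j) := by
        ext x; simp [mem_biUnion]; tauto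
      rw [h1]
      calc (((range m).biUnion fun j => A m ∩ A j).card : ℝ)
          ≤ ((∑ j ∈ range m, (A m ∩ A j).card : ℕ) : ℝ) := by
            exact_mod_cast Nat.cast_le.2 (card_biUnion_le)
        _ = ∑ j ∈ range m, ((A m ∩ A j).card : ℝ) := by push_cast; rfl
    rw [hu]
    linarith

lemma mypowerset_inter {α : Type*} [DecidableEq α] (r : ℕ) (s t : Finset α) :
    powersetCard r s ∩ powersetCard r t = powersetCard r (s ∩ t) := by
  ext u
  simp only [mem_inter, mem_powersetCard, subset_inter_iff]
  tauto

open Finset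

lemma hsq : ∀ m, 4 ≤ m → m * m ≤ 2 ^ m := by
  intro m hm
  induction m with
  | zero => omega
  | succ p ih =>
    rcases Nat.lt_or_ge p 4 with h | h
    · interval_cases p <;> first | omega | norm_num
    · have h1 := ih (by omega)
      have h2 : 2 ^ p ≥ 16 := by
        calc (16 : ℕ) = 2 ^ 4 := by norm_num
          _ ≤ 2 ^ p := Nat.pow_le_pow_right (by norm_num) h
      have : (p+1) * (p+1) = p * p + 2 * p + 1 := by ring
      have hp2 : 2 * p + 1 ≤ p * p := by nlinarith
      calc (p+1)*(p+1) = p*p + (2*p+1) := by ring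
        _ ≤ p*p + p*p := by omega
        _ ≤ 2^p + 2^p := by omega
        _ = 2^(p+1) := by ring

set_option maxHeartbeats 2000000 in
/-- There exist a constant `c > 0` and a threshold `n₀ ∈ ℕ` such that for every odd
integer `n ≥ n₀`: if `S` is a uniformly random subset of size `(n+1)/2` of `{0,1,…,n}`,
then the expected value of `MEI(S)` is at least `c·ln n`. (The expectation is the
average of `MEI(S)` over all `(n+1)/2`-element subsets `S` of `{0,1,…,n}`.) -/
theorem expected_mei_random_half_subset_log :
    ∃ c : ℝ, 0 < c ∧ ∃ n₀ : ℕ, ∀ n : ℕ, n₀ ≤ n → Odd n →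
      c * Real.log n ≤
        (∑ S ∈ (Finset.range (n + 1)).powersetCard ((n + 1) / 2), (MEI n S : ℝ)) /
          (((Finset.range (n + 1)).powersetCard ((n + 1) / 2)).card : ℝ) := by
  refine ⟨1/64, by norm_num, 2^20, fun n hn hodd => ?_⟩
  obtain ⟨t, ht⟩ := hodd
  set M := t + 1 with hM
  have hn1 : n + 1 = 2 * M := by omega
  have hN : (n + 1) / 2 = M := by omega
  rw [hN]
  set L := Nat.log 2 n with hL
  set k := L / 2 with hk
  have hnpos : n ≠ 0 := by
    have : (2:ℕ)^20 ≤ n := hn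
    omega
  have h2L : 2 ^ L ≤ n := Nat.pow_log_le_self 2 hnpos
  have hL2 : n < 2 ^ (L + 1) := Nat.lt_pow_succ_log_self one_lt_two n
  have hL20 : 20 ≤ L := (Nat.le_log_iff_pow_le one_lt_two hnpos).2 hn
  have hk10 : 10 ≤ k := by omega
  have h2k2 : 2 ^ (2 * k) ≤ n :=
    le_trans (Nat.pow_le_pow_right (by norm_num) (by omega)) h2L
  have hk4 : 4 * (k * k) ≤ n := by
    have h1 := hsq (2 * k) (by omega)
    calc 4 * (k * k) = (2*k) * (2*k) := by ring
      _ ≤ 2 ^ (2*k) := h1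
      _ ≤ n := h2k2
  have h2kM : 2 * k ≤ M := by
    have : 4 * k ≤ 4 * (k * k) := by nlinarith
    omega
  have hkM2 : 2 * (k * k) ≤ M := by omega
  set m' := 2 ^ (k - 1) with hm'
  have hm'k : m' * k ≤ n + 1 := by
    calc m' * k ≤ 2^(k-1) * 2^k := Nat.mul_le_mul_left _ (le_of_lt (Nat.lt_two_pow_self (n := k)))
      _ = 2^(k-1+k) := by rw [pow_add]
      _ ≤ 2^(2*k) := Nat.pow_le_pow_right (by norm_num) (by omega)
      _ ≤ n + 1 := by omega
  -- sets
  set C0 := (2*M).choose M with hC0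
  set Ω := (range (n+1)).powersetCard M with hΩ
  have hΩcard : Ω.card = C0 := by
    rw [hΩ, card_powersetCard, card_range, hn1]
  set D : ℕ → Finset ℕ := fun i => range (n+1) \ Finset.Ico (i*k) (i*k+k) with hD
  set A : ℕ → Finset (Finset ℕ) := fun i => (D i).powersetCard M with hA
  have hIsub : ∀ i, i < m' → Finset.Ico (i*k) (i*k+k) ⊆ range (n+1) := by
    intro i hi x hx
    rw [Finset.mem_Ico] at hx
    rw [Finset.mem_range]
    have : (i+1) * k ≤ m' * k := Nat.mul_le_mul_right _ (by omega)
    have : i * k + k ≤ n + 1 := by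
      calc i * k + k = (i+1) * k := by ring
        _ ≤ m' * k := this
        _ ≤ n + 1 := hm'k
    omega
  have hAcard : ∀ i, i < m' → (A i).card = (2*M - k).choose M := by
    intro i hi
    rw [hA]
    simp only
    rw [card_powersetCard, card_sdiff_of_subset (hIsub i hi), card_range, Nat.card_Ico]
    congr 2
    omega
  have hABcard : ∀ i j, i < m' → j < i → (A i ∩ A j).card ≤ (2*M - 2*k).choose M := by
    intro i j hi hj
    rw [hA]
    simp only
    rw [mypowerset_inter]
    have hdisj : Disjoint (Finset.Ico (i*k) (i*k+k)) (Finset.Ico (j*k) (j*k+k)) := by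
      rw [Finset.disjoint_left]
      intro x hx hx'
      rw [Finset.mem_Ico] at hx hx'
      have : (j+1) * k ≤ i * k := Nat.mul_le_mul_right _ (by omega)
      have : j * k + k ≤ i * k := by
        calc j * k + k = (j+1)*k := by ring
          _ ≤ i * k := this
      omega
    have hDD : D i ∩ D j = range (n+1) \ (Finset.Ico (i*k) (i*k+k) ∪ Finset.Ico (j*k) (j*k+k)) := by
      rw [hD]
      simp only
      rw [Finset.sdiff_union_distrib]
    rw [hDD, card_powersetCard, card_sdiff_of_subset (by
        apply Finset.union_subset (hIsub i hi) (hIsub j (by omega)))]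
    rw [card_range, Finset.card_union_of_disjoint hdisj, Nat.card_Ico, Nat.card_Ico]
    apply le_of_eq
    congr 2
    omega
  -- A i ⊆ T
  set T := Ω.filter (fun S => k ≤ MEI n S) with hT
  have hAsubT : ∀ i, i < m' → A i ⊆ T := by
    intro i hi S hS
    rw [hA] at hS
    simp only [mem_powersetCard] at hS
    obtain ⟨hSD, hScard⟩ := hS
    have hSrange : S ⊆ range (n+1) := hSD.trans (sdiff_subset)
    rw [hT, mem_filter]
    constructor
    · rw [hΩ, mem_powersetCard]; exact ⟨hSrange, hScard⟩
    · apply mei_ge n k (i*k) S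
      · intro x hx
        have := hSrange hx
        rw [mem_range] at this
        omega
      · rw [← Finset.card_pos, hScard]; omega
      · have : (i+1) * k ≤ m' * k := Nat.mul_le_mul_right _ (by omega)
        have h2 : i * k + k ≤ n + 1 := by
          calc i * k + k = (i+1) * k := by ring
            _ ≤ m' * k := this
            _ ≤ n + 1 := hm'k
        exact h2
      · intro x hx
        have hxD := hSD hx
        rw [hD] at hxD
        simp only [Finset.mem_sdiff, Finset.mem_Ico] at hxD
        omega
  have hUsubT : (range m').biUnion A ⊆ T :=
    biUnion_subset.2 (fun i hi => hAsubT i (mem_range.1 hi))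
  -- natural number sum bound
  have hsumT : k * T.card ≤ ∑ S ∈ Ω, MEI n S := by
    calc k * T.card = ∑ _S ∈ T, k := by rw [sum_const, smul_eq_mul, mul_comm]
      _ ≤ ∑ S ∈ T, MEI n S := sum_le_sum (fun S hS => (mem_filter.1 hS).2)
      _ ≤ ∑ S ∈ Ω, MEI n S := sum_le_sum_of_subset (filter_subset _ _)
  -- real estimates
  set AA : ℝ := ((2*M - k).choose M : ℝ) with hAA
  set BB : ℝ := ((2*M - 2*k).choose M : ℝ) with hBB
  set CC : ℝ := (C0 : ℝ) with hCC
  have hCCpos : (0:ℝ) < CC := by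
    rw [hCC, hC0]
    exact_mod_cast Nat.choose_pos (by omega)
  have hAApos : (0:ℝ) < AA := by
    rw [hAA]
    exact_mod_cast Nat.choose_pos (by omega)
  have hBBnonneg : (0:ℝ) ≤ BB := by positivity
  -- upper bound: 2^k * AA ≤ CC
  have hAup : 2^(k:ℕ) * AA ≤ CC := by
    have := fupper (M := M) (k := k) (by omega)
    unfold f at this
    rw [hAA, hCC, hC0]
    calc (2:ℝ)^(k:ℕ) * ((2*M - k).choose M : ℝ)
        = ((2^k * (2*M - k).choose M : ℕ) : ℝ) := by push_cast; ring
      _ ≤ (((2*M - 0).choose M : ℕ) : ℝ) := by exact_mod_cast this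
      _ = ((2*M).choose M : ℝ) := by norm_num
  -- lower bound: CC ≤ 2^(k+1) * AA
  have hAlow : CC ≤ 2^(k:ℕ) * (2 * AA) := by
    have hflow := flower (M := M) (k := k) (by omega) (j := k) le_rfl
    unfold f at hflow
    rw [Nat.sub_zero] at hflow
    have hcast : CC * ((M:ℝ) - k)^k ≤ AA * (2*(M:ℝ))^k := by
      have h1 : ((M - k : ℕ) : ℝ) = (M:ℝ) - k := Nat.cast_sub (by omega : k ≤ M)
      have h0 := (Nat.cast_le (α := ℝ)).2 hflow
      push_cast at h0
      rw [h1] at h0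
      rw [hAA, hCC, hC0]
      convert h0 using 2 <;> push_cast <;> ring
    have hMpos : (0:ℝ) < (M:ℝ) := by exact_mod_cast (by omega : 0 < M)
    have hbern : (1:ℝ)/2 ≤ ((M:ℝ) - k)^k / (M:ℝ)^k := by
      have hx : ((M:ℝ) - k)/(M:ℝ) = 1 + (-(k/(M:ℝ))) := by field_simp <;> ring
      have h1 : ((M:ℝ) - k)^k / (M:ℝ)^k = (((M:ℝ) - k)/(M:ℝ))^k := by
        rw [div_pow]
      rw [h1, hx]
      have hb := one_add_mul_le_pow (a := -((k:ℝ)/(M:ℝ))) (by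
        have : (k:ℝ)/(M:ℝ) ≤ 1 := by
          rw [div_le_one hMpos]; exact_mod_cast (by omega : k ≤ M)
        linarith) k
      have hkk : (k:ℝ) * ((k:ℝ)/(M:ℝ)) ≤ 1/2 := by
        rw [mul_div_assoc']
        rw [div_le_iff₀ hMpos]
        calc (k:ℝ) * k ≤ (M:ℝ)/2 := by
              have : (2 * (k * k) : ℕ) ≤ M := hkM2
              have h := (Nat.cast_le (α := ℝ)).2 this
              push_cast at h
              have hMcast : (M:ℝ) = (t:ℝ) + 1 := by rw [hM]; push_cast; ring
              linarith
          _ = 1/2 * M := by ring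
      calc (1:ℝ)/2 ≤ 1 + (k:ℝ) * (-((k:ℝ)/(M:ℝ))) := by
            have : (k:ℝ) * (-((k:ℝ)/(M:ℝ))) = -((k:ℝ) * ((k:ℝ)/(M:ℝ))) := by ring
            rw [this]; linarith
        _ ≤ (1 + -((k:ℝ)/(M:ℝ)))^k := hb
    -- CC * (M-k)^k ≤ AA * (2M)^k  and  (M-k)^k ≥ M^k/2
    have hMk : (0:ℝ) < (M:ℝ)^k := by positivity
    have h2Mk : ((2:ℝ)*M)^k = 2^k * (M:ℝ)^k := by rw [mul_pow]
    -- CC/2 ≤ CC * ((M-k)^k / M^k) ≤ AA * (2M)^k / M^k = AA * 2^k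
    have hstep : CC * (1/2) ≤ AA * 2^k := by
      calc CC * (1/2) ≤ CC * (((M:ℝ) - k)^k / (M:ℝ)^k) := by
            apply mul_le_mul_of_nonneg_left hbern (le_of_lt hCCpos)
        _ = (CC * ((M:ℝ) - k)^k) / (M:ℝ)^k := by ring
        _ ≤ (AA * (2*M)^k) / (M:ℝ)^k := by
            apply div_le_div_of_nonneg_right hcast (le_of_lt hMk)
        _ = AA * 2^k := by rw [h2Mk]; field_simp
    linarith
  -- log-concavity: BB * CC ≤ AA * AA
  have hBC : BB * CC ≤ AA * AA := by
    have := flogconcave (M := M) (k := k) h2kM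
    unfold f at this
    rw [Nat.sub_zero] at this
    have h0 := (Nat.cast_le (α := ℝ)).2 this
    push_cast at h0
    rw [hBB, hCC, hC0, hAA]
    convert h0 using 2 <;> push_cast <;> ring
  -- 2^k * BB ≤ AA
  have hBA : 2^(k:ℕ) * BB ≤ AA := by
    have h1 : 2^(k:ℕ) * BB * AA ≤ AA * AA := by
      calc 2^(k:ℕ) * BB * AA = BB * (2^(k:ℕ) * AA) := by ring
        _ ≤ BB * CC := mul_le_mul_of_nonneg_left hAup hBBnonneg
        _ ≤ AA * AA := hBC
    have := mul_le_mul_of_nonneg_right (le_refl AA) (le_of_lt hAApos)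
    nlinarith [hAApos]
  -- now Bonferroni
  have hbonf := bonf m' A
  have hsumA : ∑ i ∈ range m', ((A i).card : ℝ) = m' * AA := by
    rw [Finset.sum_congr rfl (fun i hi => by
      rw [hAcard i (mem_range.1 hi)])]
    rw [sum_const, card_range, nsmul_eq_mul, hAA]
  have hsumAB : ∑ i ∈ range m', ∑ j ∈ range i, ((A i ∩ A j).card : ℝ) ≤ (m':ℝ)^2/2 * BB := by
    calc ∑ i ∈ range m', ∑ j ∈ range i, ((A i ∩ A j).card : ℝ)
        ≤ ∑ i ∈ range m', ∑ _j ∈ range i, BB := by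
          apply sum_le_sum
          intro i hi
          apply sum_le_sum
          intro j hj
          rw [hBB]
          exact_mod_cast hABcard i j (mem_range.1 hi) (mem_range.1 hj)
      _ = ∑ i ∈ range m', (i:ℝ) * BB := by
          apply sum_congr rfl
          intro i _
          rw [sum_const, card_range, nsmul_eq_mul]
      _ = (∑ i ∈ range m', (i:ℝ)) * BB := by rw [← sum_mul]
      _ ≤ (m':ℝ)^2/2 * BB := by
          apply mul_le_mul_of_nonneg_right _ hBBnonneg
          have hg : (∑ i ∈ range m', i) * 2 = m' * (m' - 1) := Finset.sum_range_id_mul_two m'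
          have hg2 : (∑ i ∈ range m', (i:ℝ)) * 2 = ((m' * (m' - 1) : ℕ) : ℝ) := by
            rw [← Nat.cast_sum]
            exact_mod_cast congrArg (Nat.cast : ℕ → ℝ) hg
          have hle : (m' * (m' - 1) : ℕ) ≤ m' * m' := Nat.mul_le_mul_left _ (Nat.sub_le _ _)
          have hle2 : ((m' * (m' - 1) : ℕ) : ℝ) ≤ (m':ℝ) * m' := by
            calc ((m' * (m' - 1) : ℕ) : ℝ) ≤ ((m' * m' : ℕ) : ℝ) := by exact_mod_cast hle
              _ = (m':ℝ) * m' := by push_cast; ring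
          nlinarith [hg2, hle2]
  -- powers of two facts
  have hm'cast : (m':ℝ) = 2^((k:ℕ)-1) := by rw [hm']; push_cast; ring
  have h2m : (2:ℝ) * 2^((k:ℕ)-1) = 2^(k:ℕ) := by
    have h : (k:ℕ) - 1 + 1 = k := by omega
    calc (2:ℝ) * 2^((k:ℕ)-1) = 2^((k:ℕ)-1) * 2 := by ring
      _ = 2^((k:ℕ)-1+1) := (pow_succ 2 _).symm
      _ = 2^(k:ℕ) := by rw [h]
  have h2pos : (0:ℝ) < 2^(k:ℕ) := by positivity
  -- m' * AA ≥ CC/4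
  have hmAA : CC/4 ≤ (m':ℝ) * AA := by
    have : CC ≤ 4 * ((m':ℝ) * AA) := by
      calc CC ≤ 2^(k:ℕ) * (2 * AA) := hAlow
        _ = 4 * ((2:ℝ)^((k:ℕ)-1) * AA) := by rw [← h2m]; ring
        _ = 4 * ((m':ℝ) * AA) := by rw [hm'cast]
    linarith
  -- m'^2 * BB ≤ CC/4
  have hmBB : (m':ℝ)^2 * BB ≤ CC/4 := by
    have e1 : (m':ℝ)^2 * BB = 2^((k:ℕ)-1) * (2^((k:ℕ)-1) * BB) := by
      rw [hm'cast]; ring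
    have e2 : (2:ℝ)^((k:ℕ)-1) * BB ≤ AA / 2 := by
      have : (2:ℝ) * (2^((k:ℕ)-1) * BB) = 2^(k:ℕ) * BB := by rw [← h2m]; ring
      linarith [hBA, this]
    have e3 : (2:ℝ)^((k:ℕ)-1) * (AA/2) ≤ CC/4 := by
      have : (2:ℝ)^((k:ℕ)-1) * (AA/2) = (2^(k:ℕ) * AA)/4 := by
        rw [← h2m]; ring
      rw [this]
      linarith [hAup]
    calc (m':ℝ)^2 * BB = 2^((k:ℕ)-1) * (2^((k:ℕ)-1) * BB) := e1
      _ ≤ 2^((k:ℕ)-1) * (AA/2) := by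
          apply mul_le_mul_of_nonneg_left e2 (by positivity)
      _ ≤ CC/4 := e3
  -- union card bound
  have hU : CC/8 ≤ (((range m').biUnion A).card : ℝ) := by
    have := hbonf
    rw [hsumA] at this
    nlinarith [hsumAB, hmAA, hmBB]
  have hTreal : CC/8 ≤ (T.card : ℝ) :=
    le_trans hU (by exact_mod_cast Nat.cast_le.2 (card_le_card hUsubT))
  -- final assembly
  rw [hΩcard]
  rw [le_div_iff₀ hCCpos]
  have hsum_real : (k:ℝ) * (T.card:ℝ) ≤ ∑ S ∈ Ω, (MEI n S : ℝ) := by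
    have := hsumT
    have h := (Nat.cast_le (α := ℝ)).2 this
    push_cast at h
    convert h using 2
  have hfin : (k:ℝ) * (CC/8) ≤ ∑ S ∈ Ω, (MEI n S : ℝ) :=
    le_trans (mul_le_mul_of_nonneg_left hTreal (by positivity)) hsum_real
  have hlog : Real.log n ≤ 8 * (k:ℝ) := by
    have hn0 : (0:ℝ) < n := by exact_mod_cast Nat.pos_of_ne_zero hnpos
    have hlogn : Real.log n ≤ ((L:ℝ)+1) * Real.log 2 := by
      have hcast : (n:ℝ) ≤ 2^(L+1) := by exact_mod_cast le_of_lt hL2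
      calc Real.log n ≤ Real.log (2^(L+1)) := Real.log_le_log hn0 hcast
        _ = ((L:ℝ)+1) * Real.log 2 := by rw [Real.log_pow]; push_cast; ring
    have hlog2 : Real.log 2 ≤ 0.7 := le_of_lt (lt_trans Real.log_two_lt_d9 (by norm_num))
    have hlog2pos : (0:ℝ) ≤ Real.log 2 := Real.log_nonneg (by norm_num)
    have hkL : (L:ℝ) ≤ 2*(k:ℝ) + 1 := by
      have : L ≤ 2*k + 1 := by omega
      exact_mod_cast this
    have hk1 : (1:ℝ) ≤ (k:ℝ) := by exact_mod_cast (by omega : 1 ≤ k)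
    nlinarith
  have hCC8 : (1:ℝ)/64 * Real.log n * CC ≤ (k:ℝ) * (CC/8) := by
    have h1 : (1:ℝ)/64 * Real.log n ≤ (k:ℝ)/8 := by linarith
    nlinarith [hCCpos, h1, mul_le_mul_of_nonneg_right h1 (le_of_lt hCCpos)]
  linarith
end
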